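/- Let q be an odd prime power, d ≥ 1, and let T : 𝔽_{q^d} → 𝔽_q denote the field trace. Let (V, Q) be a nondegenerate quadratic space over 𝔽_{q^d} of even dimension n. Then T ∘ Q is a nondegenerate quadratic form on V regarded as an 𝔽_q-vector space (of dimension nd), and the discriminant disc(T ∘ Q) is the trivial square class in 𝔽_q^×/(𝔽_q^×)² if and only if disc(Q) is the trivial square class in 𝔽_{q^d}^×/(𝔽_{q^d}^×)². -/

import Mathlib

open QuadraticMap Module Finset

section Aux

variable {F : Type*} [Field F]

private lemma aux_isSquare_sq_mul {u : F} (a : F) (hu : u ≠ 0) :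
    IsSquare (u ^ 2 * a) ↔ IsSquare a := by
  constructor
  · rintro ⟨r, hr⟩
    refine ⟨u⁻¹ * r, ?_⟩
    have ha : a = u⁻¹ ^ 2 * (u ^ 2 * a) := by
      field_simp
    rw [ha, hr]; ring
  · rintro ⟨r, hr⟩
    exact ⟨u * r, by rw [hr]; ring⟩

private lemma aux_neg_one_pow_congr {a b : ℕ} (h : a % 2 = b % 2) :
    (-1 : F) ^ a = (-1 : F) ^ b := by
  conv_lhs => rw [← Nat.div_add_mod a 2]
  conv_rhs => rw [← Nat.div_add_mod b 2]
  rw [pow_add, pow_add, pow_mul, pow_mul, h]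
  norm_num

private lemma aux_gram_square_class {V ι κ : Type*} [AddCommGroup V] [Module F V]
    [Fintype ι] [Fintype κ] [DecidableEq ι] [DecidableEq κ]
    (B : V →ₗ[F] V →ₗ[F] F) (e : Basis ι F V) (f : Basis κ F V) (s : F) :
    IsSquare (s * (LinearMap.toMatrix₂ e e B).det) ↔
      IsSquare (s * (LinearMap.toMatrix₂ f f B).det) := by
  let σ : κ ≃ ι := f.indexEquiv e
  let f' : Basis ι F V := f.reindex σ
  have h1 : (LinearMap.toMatrix₂ f' f' B).det = (LinearMap.toMatrix₂ f f B).det := by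
    have h : LinearMap.toMatrix₂ f' f' B =
        (LinearMap.toMatrix₂ f f B).submatrix σ.symm σ.symm := by
      ext i j
      simp [LinearMap.toMatrix₂_apply, f', Matrix.submatrix_apply]
    rw [h, Matrix.det_submatrix_equiv_self]
  have h2 : LinearMap.toMatrix₂ e e B =
      (LinearMap.toMatrix e f' LinearMap.id).transpose * LinearMap.toMatrix₂ f' f' B *
        (LinearMap.toMatrix e f' LinearMap.id) := by
    have h0 := LinearMap.toMatrix₂_compl₁₂ f' f' e e B LinearMap.id LinearMap.id
    rw [LinearMap.compl₁₂_id_id] at h0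
    exact h0
  have hP : (LinearMap.toMatrix e f' LinearMap.id).det ≠ 0 := by
    rw [LinearMap.toMatrix_id_eq_basis_toMatrix]
    haveI := f'.invertibleToMatrix e
    exact (Matrix.isUnit_det_of_invertible _).ne_zero
  rw [← h1, h2, Matrix.det_mul, Matrix.det_mul, Matrix.det_transpose]
  have h3 : s * ((LinearMap.toMatrix e f' LinearMap.id).det *
      (LinearMap.toMatrix₂ f' f' B).det * (LinearMap.toMatrix e f' LinearMap.id).det) =
      (LinearMap.toMatrix e f' LinearMap.id).det ^ 2 *
        (s * (LinearMap.toMatrix₂ f' f' B).det) := by ring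
  rw [h3]
  exact aux_isSquare_sq_mul _ hP

end Aux

section NormAux

variable (F K : Type*) [Field F] [Fintype F] [Field K] [Fintype K] [Algebra F K]

private lemma aux_norm_pow_formula (a : K) :
    algebraMap F K (Algebra.norm F a) =
      a ^ ∑ i ∈ Finset.range (finrank F K), Fintype.card F ^ i := by
  classical
  set r : ℕ := Fintype.card F with hr
  set m : ℕ := finrank F K with hm
  set p : ℕ := ringChar F with hpdef
  haveI : CharP K p := charP_of_injective_algebraMap (algebraMap F K).injective p
  obtain ⟨s, hp, hcard⟩ := FiniteField.card F p
  haveI : Fact p.Prime := ⟨hp⟩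
  haveI : ExpChar K p := ExpChar.prime hp
  -- the Frobenius as an F-algebra automorphism of K
  let φA : K →ₐ[F] K :=
    { iterateFrobenius K p (s : ℕ) with
      commutes' := fun c => by
        show iterateFrobenius K p (s : ℕ) (algebraMap F K c) = algebraMap F K c
        rw [iterateFrobenius_def, ← map_pow, ← hcard, FiniteField.pow_card] }
  have hbij : Function.Bijective φA :=
    Finite.injective_iff_bijective.mp φA.toRingHom.injective
  let φ : K ≃ₐ[F] K := AlgEquiv.ofBijective φA hbij
  have hφ : ∀ x : K, φ x = x ^ r := by
    intro x
    show φA x = x ^ r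
    show iterateFrobenius K p (s : ℕ) x = x ^ r
    rw [iterateFrobenius_def, ← hcard]
  have hpow : ∀ (i : ℕ) (x : K), (φ ^ i) x = x ^ r ^ i := by
    intro i
    induction i with
    | zero => intro x; simp
    | succ i ih =>
      intro x
      rw [pow_succ, AlgEquiv.mul_apply, hφ, ih, ← pow_mul, pow_succ]
      ring_nf
  have hr2 : 1 < r := Fintype.one_lt_card
  have hcardK : Fintype.card K = r ^ m := card_eq_pow_finrank
  -- distinct powers
  have hone : ∀ k : ℕ, 0 < k → k < m → φ ^ k ≠ 1 := by
    intro k hk0 hkm h1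
    obtain ⟨g, hg⟩ := IsCyclic.exists_generator (α := Kˣ)
    have horder : orderOf g = Fintype.card K - 1 := by
      rw [orderOf_eq_card_of_forall_mem_zpowers hg, Nat.card_eq_fintype_card,
        Fintype.card_units]
    have hgp : (g : K) ^ r ^ k = (g : K) := by
      have := hpow k (g : K)
      rw [h1] at this
      simpa using this.symm
    have hrk1 : 1 ≤ r ^ k := Nat.one_le_pow _ _ (by omega)
    have hgu : g ^ (r ^ k - 1) = 1 := by
      have h2 : g ^ (r ^ k) = g := by
        ext
        push_cast
        exact hgp
      have h3 : g ^ (r ^ k - 1) * g = g := by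
        rw [← pow_succ]
        have : r ^ k - 1 + 1 = r ^ k := by omega
        rw [this, h2]
      calc g ^ (r ^ k - 1) = g ^ (r ^ k - 1) * g * g⁻¹ := by group
        _ = g * g⁻¹ := by rw [h3]
        _ = 1 := mul_inv_cancel g
    have hdvd : Fintype.card K - 1 ∣ r ^ k - 1 := horder ▸ orderOf_dvd_of_pow_eq_one hgu
    have hlt : r ^ k < r ^ m := Nat.pow_lt_pow_right hr2 hkm
    have hpos : 0 < r ^ k - 1 := by
      have : 1 < r ^ k := by
        calc 1 < r := hr2
          _ ≤ r ^ k := Nat.le_self_pow (by omega) r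
      omega
    have := Nat.le_of_dvd hpos hdvd
    rw [hcardK] at this
    omega
  have hkey : ∀ i j : Fin m, (i : ℕ) ≤ (j : ℕ) → φ ^ (i : ℕ) = φ ^ (j : ℕ) → i = j := by
    intro i j hij h
    have h2 : φ ^ (i : ℕ) * φ ^ ((j : ℕ) - (i : ℕ)) = φ ^ (i : ℕ) * 1 := by
      rw [mul_one, ← pow_add]
      have : (i : ℕ) + ((j : ℕ) - (i : ℕ)) = (j : ℕ) := by omega
      rw [this, h]
    have h3 : φ ^ ((j : ℕ) - (i : ℕ)) = 1 := mul_left_cancel h2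
    by_contra hne
    have hpos : 0 < (j : ℕ) - (i : ℕ) := by
      have : (i : ℕ) ≠ (j : ℕ) := fun hc => hne (Fin.ext hc)
      omega
    exact hone _ hpos (by omega) h3
  have hinj : Function.Injective (fun i : Fin m => φ ^ (i : ℕ)) := by
    intro i j h
    rcases le_total (i : ℕ) (j : ℕ) with hle | hle
    · exact hkey i j hle h
    · exact (hkey j i hle h.symm).symm
  have hbij2 : Function.Bijective (fun i : Fin m => φ ^ (i : ℕ)) := by
    rw [Fintype.bijective_iff_injective_and_card]
    refine ⟨hinj, ?_⟩
    rw [Fintype.card_fin, ← Nat.card_eq_fintype_card, IsGalois.card_aut_eq_finrank]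
  rw [Algebra.norm_eq_prod_automorphisms]
  rw [← Fintype.prod_bijective (fun i : Fin m => φ ^ (i : ℕ)) hbij2
    (fun i => (φ ^ (i : ℕ)) a) (fun σ => σ a) (fun i => rfl)]
  simp_rw [hpow]
  rw [Finset.prod_pow_eq_pow_sum, Fin.sum_univ_eq_sum_range]

private lemma aux_isSquare_norm_iff (hodd : Odd (Fintype.card F)) {a : K} (ha : a ≠ 0) :
    IsSquare (Algebra.norm F a) ↔ IsSquare a := by
  have hoddn : Fintype.card F % 2 = 1 := Nat.odd_iff.mp hodd
  have hcharF : ringChar F ≠ 2 := fun h => by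
    have := FiniteField.even_card_of_char_two h; omega
  set r : ℕ := Fintype.card F with hr
  set m : ℕ := finrank F K with hm
  have hr2 : 1 < r := Fintype.one_lt_card
  have hcardK : Fintype.card K = r ^ m := card_eq_pow_finrank
  have hoddK : Fintype.card K % 2 = 1 := by
    rw [hcardK]
    have := Nat.odd_iff.mpr hoddn
    exact Nat.odd_iff.mp (this.pow)
  have hcharK : ringChar K ≠ 2 := fun h => by
    have := FiniteField.even_card_of_char_two h; omega
  have hnorm_ne : Algebra.norm F a ≠ 0 := by
    rw [Algebra.norm_ne_zero_iff]
    exact ha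
  rw [FiniteField.isSquare_iff hcharF hnorm_ne, FiniteField.isSquare_iff hcharK ha]
  -- key computation
  have hgeom : (∑ i ∈ Finset.range m, r ^ i) * (r - 1) = r ^ m - 1 := by
    have h3 : (1 : ℕ) ≤ r ^ m := Nat.one_le_pow _ _ (by omega)
    have h1r : (1 : ℕ) ≤ r := by omega
    have hcast : (((∑ i ∈ Finset.range m, r ^ i) * (r - 1) : ℕ) : ℤ) = ((r ^ m - 1 : ℕ) : ℤ) := by
      push_cast [Nat.cast_sub h1r, Nat.cast_sub h3]
      exact geom_sum_mul _ _
    exact_mod_cast hcast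
  have hexp : (∑ i ∈ Finset.range m, r ^ i) * (r / 2) = r ^ m / 2 := by
    obtain ⟨u, hu⟩ : ∃ u, r = 2 * u + 1 := ⟨r / 2, by omega⟩
    have hrdiv : r / 2 = u := by omega
    have h3 : (1 : ℕ) ≤ r ^ m := Nat.one_le_pow _ _ (by omega)
    have hoddrm : r ^ m % 2 = 1 := by
      rw [← hcardK]; exact hoddK
    obtain ⟨v, hv⟩ : ∃ v, r ^ m = 2 * v + 1 := ⟨r ^ m / 2, by omega⟩
    have hrmdiv : r ^ m / 2 = v := by omega
    rw [hrdiv, hrmdiv]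
    have : (∑ i ∈ Finset.range m, r ^ i) * (2 * u) = 2 * v := by
      calc (∑ i ∈ Finset.range m, r ^ i) * (2 * u)
          = (∑ i ∈ Finset.range m, r ^ i) * (r - 1) := by congr 1; omega
        _ = r ^ m - 1 := hgeom
        _ = 2 * v := by omega
    have h6 : 2 * ((∑ i ∈ Finset.range m, r ^ i) * u) = 2 * v := by
      calc 2 * ((∑ i ∈ Finset.range m, r ^ i) * u)
          = (∑ i ∈ Finset.range m, r ^ i) * (2 * u) := by ring
        _ = 2 * v := this
    omega
  have key : algebraMap F K (Algebra.norm F a ^ (Fintype.card F / 2)) =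
      a ^ (Fintype.card K / 2) := by
    rw [map_pow, aux_norm_pow_formula, ← pow_mul, hcardK, ← hr, ← hm, hexp]
  constructor
  · intro h
    have := key
    rw [h, map_one] at this
    exact this.symm
  · intro h
    have : algebraMap F K (Algebra.norm F a ^ (Fintype.card F / 2)) = algebraMap F K 1 := by
      rw [key, h, map_one]
    exact (algebraMap F K).injective this

end NormAux

/-- Let `q` be an odd prime power, `d ≥ 1`, and `T : 𝔽_{q^d} → 𝔽_q` the
field trace.  For a nondegenerate quadratic space `(V, Q)` over `𝔽_{q^d}` of even
dimension, `T ∘ Q` is a nondegenerate quadratic form on `V` viewed as an `𝔽_q`-space, and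
`disc (T ∘ Q)` is trivial iff `disc Q` is trivial. -/
theorem statement9 {F K V : Type*} [Field F] [Fintype F] [Field K] [Fintype K]
    [Algebra F K] [AddCommGroup V] [Module K V] [Module F V] [IsScalarTower F K V]
    [FiniteDimensional K V]
    (q d : ℕ) (hq : IsPrimePow q) (hodd : Odd q) (hd : 1 ≤ d)
    (hF : Fintype.card F = q) (hK : Fintype.card K = q ^ d)
    (Q : QuadraticForm K V)
    (hnd : ∀ x : V, (∀ y : V, polar (⇑Q) x y = 0) → x = 0)
    (heven : Even (Module.finrank K V)) :
    -- `T ∘ Q` is nondegenerate over `F` (its polarization is `T ∘ (polarization of Q)`)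
    (∀ x : V, (∀ y : V, Algebra.trace F K (polar (⇑Q) x y) = 0) → x = 0) ∧
    -- `disc (T ∘ Q)` is trivial iff `disc Q` is trivial
    (∀ (N n : ℕ) (e : Basis (Fin N) F V) (f : Basis (Fin n) K V),
      (IsSquare ((-1 : F) ^ (N * (N - 1) / 2) *
          (Matrix.of fun i j => Algebra.trace F K (polar (⇑Q) (e i) (e j))).det) ↔
        IsSquare ((-1 : K) ^ (n * (n - 1) / 2) *
          (Matrix.of fun i j => polar (⇑Q) (f i) (f j)).det))) := by
  classical
  have hcardF_odd : Odd (Fintype.card F) := hF ▸ hodd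
  have hcardK_odd : Odd (Fintype.card K) := by rw [hK]; exact hodd.pow
  have hcharK : ringChar K ≠ 2 := fun h => by
    have := FiniteField.even_card_of_char_two h
    have := Nat.odd_iff.mp hcardK_odd
    omega
  have h2K : (2 : K) ≠ 0 := Ring.two_ne_zero hcharK
  haveI : Invertible (2 : K) := invertibleOfNonzero h2K
  -- the trace is not identically zero
  have htrace : ∃ z : K, Algebra.trace F K z ≠ 0 := by
    by_contra h
    push_neg at h
    have h1 := (traceForm_nondegenerate F K).1 1 (fun y => by
      simp [Algebra.traceForm_apply, h])
    exact one_ne_zero h1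
  constructor
  · intro x hx
    by_contra hx0
    have hne : ¬ ∀ y, polar (⇑Q) x y = 0 := fun hall => hx0 (hnd x hall)
    push_neg at hne
    obtain ⟨y, hy⟩ := hne
    obtain ⟨z, hz⟩ := htrace
    apply hz
    have h1 := hx ((z * (polar (⇑Q) x y)⁻¹) • y)
    rwa [polar_smul_right, smul_eq_mul, mul_assoc, inv_mul_cancel₀ hy, mul_one] at h1
  · intro N n e f
    -- dimensions
    have hn : finrank K V = n := by rw [finrank_eq_card_basis f, Fintype.card_fin]
    set BK : LinearMap.BilinForm K V := polarBilin Q with hBKdef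
    have hBKsymm : BK.IsSymm := by
      rw [LinearMap.BilinForm.isSymm_def]
      intro x y
      simp only [RingHom.id_apply, hBKdef, polarBilin_apply_apply]
      exact polar_comm _ x y
    obtain ⟨g, hg⟩ := LinearMap.BilinForm.exists_orthogonal_basis (LinearMap.BilinForm.isSymm_iff.mp hBKsymm)
    have hgo : ∀ i j, i ≠ j → BK (g i) (g j) = 0 := LinearMap.isOrthoᵢ_def.mp hg
    set c : Fin (finrank K V) → K := fun i => BK (g i) (g i) with hc
    set BF : LinearMap.BilinForm F V := LinearMap.mk₂ F
      (fun x y => Algebra.trace F K (polar (⇑Q) x y))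
      (fun x x' y => by
        show Algebra.trace F K (polar (⇑Q) (x + x') y) =
          Algebra.trace F K (polar (⇑Q) x y) + Algebra.trace F K (polar (⇑Q) x' y)
        rw [polar_add_left, map_add])
      (fun a x y => by
        show Algebra.trace F K (polar (⇑Q) (a • x) y) =
          a • Algebra.trace F K (polar (⇑Q) x y)
        rw [← algebraMap_smul K a x, polar_smul_left, algebraMap_smul, _root_.map_smul])
      (fun x y y' => by
        show Algebra.trace F K (polar (⇑Q) x (y + y')) =
          Algebra.trace F K (polar (⇑Q) x y) + Algebra.trace F K (polar (⇑Q) x y')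
        rw [polar_add_right, map_add])
      (fun a x y => by
        show Algebra.trace F K (polar (⇑Q) x (a • y)) =
          a • Algebra.trace F K (polar (⇑Q) x y)
        rw [← algebraMap_smul K a y, polar_smul_right, algebraMap_smul, _root_.map_smul])
      with hBFdef
    have hBF : ∀ x y : V, BF x y = Algebra.trace F K (polar (⇑Q) x y) := fun _ _ => rfl
    have hMe : (Matrix.of fun i j => Algebra.trace F K (polar (⇑Q) (e i) (e j))) =
        LinearMap.toMatrix₂ e e BF := by
      ext i j
      rw [LinearMap.toMatrix₂_apply, hBF, Matrix.of_apply]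
    have hMf : (Matrix.of fun i j => polar (⇑Q) (f i) (f j)) =
        LinearMap.toMatrix₂ f f BK := by
      ext i j
      rw [LinearMap.toMatrix₂_apply, Matrix.of_apply, hBKdef, polarBilin_apply_apply]
    have hdiag : LinearMap.toMatrix₂ g g BK = Matrix.diagonal c := by
      ext i j
      rcases eq_or_ne i j with rfl | hij
      · rw [LinearMap.toMatrix₂_apply, Matrix.diagonal_apply_eq]
      · rw [LinearMap.toMatrix₂_apply, Matrix.diagonal_apply_ne _ hij]
        exact hgo i j hij
    have hsep : BK.SeparatingLeft := by
      intro x hx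
      exact hnd x (fun y => by
        have h1 := hx y
        rwa [hBKdef, polarBilin_apply_apply] at h1)
    have hdetg : (LinearMap.toMatrix₂ g g BK).det = ∏ i, c i := by
      rw [hdiag, Matrix.det_diagonal]
    have hdet_ne : (LinearMap.toMatrix₂ g g BK).det ≠ 0 :=
      (LinearMap.separatingLeft_iff_det_ne_zero g).mp hsep
    have hprod_ne : (∏ i, c i) ≠ 0 := hdetg ▸ hdet_ne
    -- F-side
    set m : ℕ := finrank F K with hm
    set bK : Basis (Fin m) F K := Module.finBasis F K with hbK
    set bV : Basis (Fin m × Fin (finrank K V)) F V := bK.smulTower g with hbV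
    set D : F := (LinearMap.toMatrix₂ bK bK (Algebra.traceForm F K)).det with hD
    have hD_ne : D ≠ 0 := by
      rw [hD]
      exact (LinearMap.separatingLeft_iff_det_ne_zero bK).mp (traceForm_nondegenerate F K).1
    have hlmul : ∀ (a x : K), ((Algebra.lmul F K) a) x = a * x := fun a x => rfl
    have hci : ∀ i, c i = polar (⇑Q) (g i) (g i) := fun i => by
      simp only [hc, hBKdef, polarBilin_apply_apply]
    have hblock : LinearMap.toMatrix₂ bV bV BF = Matrix.blockDiagonal
        (fun i => LinearMap.toMatrix₂ bK bK
          (LinearMap.comp (Algebra.traceForm F K) ((Algebra.lmul F K) (c i)))) := by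
      ext ⟨k, i⟩ ⟨l, j⟩
      rw [LinearMap.toMatrix₂_apply, Matrix.blockDiagonal_apply]
      rcases eq_or_ne i j with rfl | hij
      · rw [if_pos rfl, LinearMap.toMatrix₂_apply, hbV, Basis.smulTower_apply,
          Basis.smulTower_apply, hBF, polar_smul_left, polar_smul_right,
          LinearMap.comp_apply, hlmul, Algebra.traceForm_apply]
        simp only [smul_eq_mul]
        rw [hci i]
        congr 1
        ring
      · rw [if_neg hij, hbV, Basis.smulTower_apply, Basis.smulTower_apply, hBF,
          polar_smul_left, polar_smul_right]
        have h0 : polar (⇑Q) (g i) (g j) = 0 := by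
          have h1 := hgo i j hij
          rwa [hBKdef, polarBilin_apply_apply] at h1
        rw [h0]
        simp
    have hdetblk : ∀ i, (LinearMap.toMatrix₂ bK bK
        (LinearMap.comp (Algebra.traceForm F K) ((Algebra.lmul F K) (c i)))).det =
        Algebra.norm F (c i) * D := by
      intro i
      rw [LinearMap.toMatrix₂_comp bK bK bK, Matrix.det_mul, Matrix.det_transpose,
        LinearMap.det_toMatrix, hD, ← Algebra.norm_apply]
    have hdetF : (LinearMap.toMatrix₂ bV bV BF).det =
        Algebra.norm F (∏ i, c i) * D ^ (finrank K V) := by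
      rw [hblock, Matrix.det_blockDiagonal]
      simp_rw [hdetblk]
      rw [Finset.prod_mul_distrib, ← map_prod, Finset.prod_const, Finset.card_univ,
        Fintype.card_fin]
    -- dimension bookkeeping
    have hNV : finrank F V = N := by rw [finrank_eq_card_basis e, Fintype.card_fin]
    have hN : N = m * n := by
      rw [← hNV, ← finrank_mul_finrank F K V, hn, hm]
    have hneven : Even n := hn ▸ heven
    obtain ⟨t, ht⟩ := hneven
    -- parity
    have hpar : (m * (n * (n - 1) / 2)) % 2 = (N * (N - 1) / 2) % 2 := by
      have e1 : n * (n - 1) / 2 = t * (n - 1) := by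
        rw [show n * (n - 1) = 2 * (t * (n - 1)) by rw [ht]; ring,
          Nat.mul_div_cancel_left _ two_pos]
      have e2 : N * (N - 1) / 2 = m * t * (N - 1) := by
        rw [show N * (N - 1) = 2 * (m * t * (N - 1)) by rw [hN, ht]; ring,
          Nat.mul_div_cancel_left _ two_pos]
      rw [e1, e2]
      rcases Nat.eq_zero_or_pos (m * t) with h0 | hpos
      · rw [show m * (t * (n - 1)) = (m * t) * (n - 1) by ring, h0]
        simp
      · have hmt1 : 1 ≤ m * t := hpos
        have hk1 : (n - 1) % 2 = 1 := by
          have ht' : 1 ≤ t := by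
            by_contra h'
            push_neg at h'
            interval_cases t
            omega
          omega
        have hk2 : (N - 1) % 2 = 1 := by
          have hN2 : N = 2 * (m * t) := by rw [hN, ht]; ring
          omega
        have c1 : (m * (t * (n - 1))) % 2 = (m * t) % 2 := by
          rw [show m * (t * (n - 1)) = (m * t) * (n - 1) by ring, Nat.mul_mod, hk1, mul_one]
          omega
        have c2 : (m * t * (N - 1)) % 2 = (m * t) % 2 := by
          rw [Nat.mul_mod, hk2, mul_one]
          omega
        rw [c1, c2]
    -- put everything together
    rw [hMe, hMf]
    have hneg : Algebra.norm F (-1 : K) = (-1 : F) ^ m := by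
      rw [show (-1 : K) = algebraMap F K (-1) by simp, Algebra.norm_algebraMap, hm]
    have hnormside : Algebra.norm F ((-1 : K) ^ (n * (n - 1) / 2) * ∏ i, c i) =
        (-1 : F) ^ (N * (N - 1) / 2) * Algebra.norm F (∏ i, c i) := by
      rw [map_mul, map_pow, hneg, ← pow_mul]
      congr 1
      exact aux_neg_one_pow_congr hpar
    have hsK_ne : (-1 : K) ^ (n * (n - 1) / 2) * ∏ i, c i ≠ 0 :=
      mul_ne_zero (pow_ne_zero _ (neg_ne_zero.mpr one_ne_zero)) hprod_ne
    have hDt : (-1 : F) ^ (N * (N - 1) / 2) *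
        (Algebra.norm F (∏ i, c i) * D ^ (finrank K V)) =
        (D ^ t) ^ 2 * ((-1 : F) ^ (N * (N - 1) / 2) * Algebra.norm F (∏ i, c i)) := by
      have hDpow : D ^ (finrank K V) = (D ^ t) ^ 2 := by
        rw [← pow_mul]
        congr 1
        omega
      rw [hDpow]
      ring
    calc IsSquare ((-1 : F) ^ (N * (N - 1) / 2) * (LinearMap.toMatrix₂ e e BF).det)
        ↔ IsSquare ((-1 : F) ^ (N * (N - 1) / 2) * (LinearMap.toMatrix₂ bV bV BF).det) :=
          aux_gram_square_class BF e bV _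
      _ ↔ IsSquare ((D ^ t) ^ 2 *
            ((-1 : F) ^ (N * (N - 1) / 2) * Algebra.norm F (∏ i, c i))) := by
          rw [hdetF, hDt]
      _ ↔ IsSquare ((-1 : F) ^ (N * (N - 1) / 2) * Algebra.norm F (∏ i, c i)) :=
          aux_isSquare_sq_mul _ (pow_ne_zero t hD_ne)
      _ ↔ IsSquare (Algebra.norm F ((-1 : K) ^ (n * (n - 1) / 2) * ∏ i, c i)) := by
          rw [hnormside]
      _ ↔ IsSquare ((-1 : K) ^ (n * (n - 1) / 2) * ∏ i, c i) :=
          aux_isSquare_norm_iff F K hcardF_odd hsK_ne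
      _ ↔ IsSquare ((-1 : K) ^ (n * (n - 1) / 2) * (LinearMap.toMatrix₂ g g BK).det) := by
          rw [hdetg]
      _ ↔ IsSquare ((-1 : K) ^ (n * (n - 1) / 2) * (LinearMap.toMatrix₂ f f BK).det) :=
          aux_gram_square_class BK g f _
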